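/- Let Θ : ℝ → (0,∞) be a C¹ even function satisfying lim_{v→±∞} |v|Θ(v) = 1 and let β ∈ (1,5). Define F = (β/2)·Θ'/Θ and ℓ(v) = 2∫_0^v Θ(u)^{-β} (∫_0^u Θ(w)^β dw) du. Then ℓ is twice continuously differentiable on ℝ and solves the Poisson equation ℓ'(v) F(v) + (1/2) ℓ''(v) = 1 for every v ∈ ℝ. -/
import Mathlib


open MeasureTheory Filter Topology intervalIntegral

/-- With `F = (β/2) Θ'/Θ` and `ℓ(v) = 2∫_0^v Θ(u)^{-β} (∫_0^u Θ(w)^β dw) du`,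
the function `ℓ` is `C²` and solves the Poisson equation `ℓ' F + ℓ''/2 = 1`. -/
theorem stmt3 (β : ℝ) (hβ1 : 1 < β) (hβ5 : β < 5)
    (Θ : ℝ → ℝ) (hΘpos : ∀ v, 0 < Θ v) (hΘC1 : ContDiff ℝ 1 Θ)
    (hΘeven : ∀ v, Θ (-v) = Θ v)
    (hΘtop : Tendsto (fun v : ℝ => |v| * Θ v) atTop (𝓝 1))
    (hΘbot : Tendsto (fun v : ℝ => |v| * Θ v) atBot (𝓝 1)) :
    let F : ℝ → ℝ := fun v => (β / 2) * deriv Θ v / Θ v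
    let ℓ : ℝ → ℝ := fun v =>
      2 * ∫ u in (0 : ℝ)..v, (Θ u) ^ (-β) * ∫ w in (0 : ℝ)..u, (Θ w) ^ β
    ContDiff ℝ 2 ℓ ∧ ∀ v : ℝ, deriv ℓ v * F v + (1 / 2) * deriv (deriv ℓ) v = 1 := by
  intro F ℓ
  have hΘne : ∀ v, Θ v ≠ 0 := fun v => (hΘpos v).ne'
  obtain ⟨hΘdiff, hΘ'cont⟩ := contDiff_one_iff_deriv.mp hΘC1
  have hΘcont : Continuous Θ := hΘdiff.continuous
  -- inner antiderivative
  set G : ℝ → ℝ := fun u => ∫ w in (0 : ℝ)..u, (Θ w) ^ β with hGdef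
  have hpowcont : Continuous fun w => (Θ w) ^ β :=
    hΘcont.rpow_const fun x => Or.inl (hΘne x)
  have hGderiv : ∀ u, HasDerivAt G ((Θ u) ^ β) u := fun u =>
    (hpowcont.integral_hasStrictDerivAt 0 u).hasDerivAt
  have hGcont : Continuous G :=
    continuous_iff_continuousAt.mpr fun u => (hGderiv u).continuousAt
  -- the integrand g
  set g : ℝ → ℝ := fun u => (Θ u) ^ (-β) * G u with hgdef
  set g' : ℝ → ℝ := fun v =>
    deriv Θ v * (-β) * (Θ v) ^ (-β - 1) * G v + (Θ v) ^ (-β) * (Θ v) ^ β with hg'def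
  have hgderiv : ∀ v, HasDerivAt g (g' v) v := fun v => by
    exact (((hΘdiff v).hasDerivAt).rpow_const (Or.inl (hΘne v))).mul (hGderiv v)
  have hgcont : Continuous g :=
    (hΘcont.rpow_const fun x => Or.inl (hΘne x)).mul hGcont
  have hg'cont : Continuous g' := by
    apply Continuous.add
    · exact ((hΘ'cont.mul continuous_const).mul
        (hΘcont.rpow_const fun x => Or.inl (hΘne x))).mul hGcont
    · exact (hΘcont.rpow_const fun x => Or.inl (hΘne x)).mul hpowcont
  -- derivative of ℓ
  have hℓderiv : ∀ v, HasDerivAt ℓ (2 * g v) v := fun v =>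
    ((hgcont.integral_hasStrictDerivAt 0 v).hasDerivAt).const_mul 2
  have hℓ' : deriv ℓ = fun v => 2 * g v := funext fun v => (hℓderiv v).deriv
  have hℓ'' : ∀ v, deriv (deriv ℓ) v = 2 * g' v := fun v => by
    rw [hℓ']; exact ((hgderiv v).const_mul 2).deriv
  have hgC1 : ContDiff ℝ 1 g := contDiff_one_iff_deriv.mpr
    ⟨fun v => (hgderiv v).differentiableAt,
     by rw [funext fun v => (hgderiv v).deriv]; exact hg'cont⟩
  constructor
  · have : (2 : WithTop ℕ∞) = 1 + 1 := rfl
    rw [this, contDiff_succ_iff_deriv]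
    refine ⟨fun v => (hℓderiv v).differentiableAt, by simp, ?_⟩
    rw [hℓ']
    exact contDiff_const.mul hgC1
  · intro v
    rw [hℓ', ((hgderiv v).const_mul 2).deriv]
    simp only [F, hgdef, hg'def]
    have h1 : (Θ v) ^ (-β) * (Θ v) ^ β = 1 := by
      rw [← Real.rpow_add (hΘpos v), neg_add_cancel, Real.rpow_zero]
    have h2 : (Θ v) ^ (-β - 1) = (Θ v) ^ (-β) / Θ v := by
      rw [Real.rpow_sub (hΘpos v), Real.rpow_one]
    rw [h1, h2]
    field_simp
    ring
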